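/- Denominator asymptotics for two-fold JIVE: writing $\hat H_K = \sum_{a=1}^K \bar S_{a,0}\bar S_{a,1} = H_{1,K}+H_{2,K}+H_{3,K}$ with $H_{1,K}=\sum_a\pi_a^2$, $H_{2,K}=\sum_a\pi_a(\bar\eta_{a,0}+\bar\eta_{a,1})$, $H_{3,K}=\sum_a\bar\eta_{a,0}\bar\eta_{a,1}$, if $\sum_a\pi_{a,m}^2/(\sqrt{K_m}\sigma^2_{\bar\eta,m})\to\infty$, then $H_{2,K}/H_{1,K}\to 0$ and $H_{3,K}/H_{1,K}\to 0$ in probability, hence $\hat H_K/H_{1,K}\to 1$ in probability. -/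

import Mathlib

open Finset Filter
open scoped Classical Topology

noncomputable def dPr {Ω : Type*} [Fintype Ω] (w : Ω → ℝ) (P : Ω → Prop) : ℝ :=
  ∑ ω, if P ω then w ω else 0

noncomputable def dExp {Ω : Type*} [Fintype Ω] (w : Ω → ℝ) (f : Ω → ℝ) : ℝ :=
  ∑ ω, w ω * f ω

section helpers

variable {Ω : Type*} [Fintype Ω] (w : Ω → ℝ)

lemma dExp_sum {ι : Type*} (s : Finset ι) (f : ι → Ω → ℝ) :
    dExp w (fun ω => ∑ i ∈ s, f i ω) = ∑ i ∈ s, dExp w (f i) := by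
  simp only [dExp, Finset.mul_sum]
  exact Finset.sum_comm

lemma dExp_smul (r : ℝ) (f : Ω → ℝ) :
    dExp w (fun ω => r * f ω) = r * dExp w f := by
  simp only [dExp, Finset.mul_sum]
  exact Finset.sum_congr rfl fun ω _ => by ring

lemma dExp_one (hw1 : ∑ ω, w ω = 1) : dExp w (fun _ => 1) = 1 := by
  simp [dExp, hw1]

lemma dPr_nonneg (hw : ∀ ω, 0 ≤ w ω) (P : Ω → Prop) : 0 ≤ dPr w P := by
  refine Finset.sum_nonneg fun ω _ => ?_
  split <;> simp [hw ω]

lemma dPr_mono (hw : ∀ ω, 0 ≤ w ω) {P Q : Ω → Prop} (h : ∀ ω, P ω → Q ω) :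
    dPr w P ≤ dPr w Q := by
  refine Finset.sum_le_sum fun ω _ => ?_
  by_cases hp : P ω
  · simp [hp, h ω hp]
  · simp only [hp, if_false]; split <;> simp [hw ω]

lemma dPr_or_le (hw : ∀ ω, 0 ≤ w ω) (P Q : Ω → Prop) :
    dPr w (fun ω => P ω ∨ Q ω) ≤ dPr w P + dPr w Q := by
  rw [dPr, dPr, dPr, ← Finset.sum_add_distrib]
  refine Finset.sum_le_sum fun ω _ => ?_
  by_cases hp : P ω <;> by_cases hq : Q ω <;> simp [hp, hq, hw ω]

lemma chebyshev (hw : ∀ ω, 0 ≤ w ω) (X : Ω → ℝ) {δ : ℝ} (hδ : 0 < δ) :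
    dPr w (fun ω => δ ≤ |X ω|) ≤ dExp w (fun ω => X ω ^ 2) / δ ^ 2 := by
  rw [dPr, dExp, Finset.sum_div]
  refine Finset.sum_le_sum fun ω _ => ?_
  by_cases h : δ ≤ |X ω|
  · simp only [h, if_true]
    have h2 : δ ^ 2 ≤ X ω ^ 2 := by
      rw [← sq_abs (X ω)]; exact pow_le_pow_left₀ hδ.le h 2
    have h3 : (1:ℝ) ≤ X ω ^2 / δ^2 := (one_le_div (by positivity)).2 h2
    calc w ω = w ω * 1 := by ring
      _ ≤ w ω * (X ω ^2 / δ^2) := mul_le_mul_of_nonneg_left h3 (hw ω)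
      _ = w ω * X ω ^2 / δ^2 := by ring
  · simp only [h, if_false]
    have : (0:ℝ) ≤ w ω * X ω ^2 / δ^2 := div_nonneg (mul_nonneg (hw ω) (sq_nonneg _)) (sq_nonneg _)
    linarith

end helpers

section moments

variable {K : ℕ} {Ω : Type*} [Fintype Ω] (w : Ω → ℝ) (η : Fin K → Fin 2 → Ω → ℝ) (ση : ℝ)

lemma dExp_sum' {ι : Type*} (s : Finset ι) (f : ι → Ω → ℝ) :
    dExp w (fun ω => ∑ i ∈ s, f i ω) = ∑ i ∈ s, dExp w (f i) := by
  simp only [dExp, Finset.mul_sum]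
  exact Finset.sum_comm

lemma dExp_smul' (r : ℝ) (f : Ω → ℝ) :
    dExp w (fun ω => r * f ω) = r * dExp w f := by
  simp only [dExp, Finset.mul_sum]
  exact Finset.sum_congr rfl fun ω _ => by ring

lemma dExp_one' (hw1 : ∑ ω, w ω = 1) : dExp w (fun _ => 1) = 1 := by
  simp [dExp, hw1]

lemma momE
    (hmean : ∀ a v, dExp w (η a v) = 0)
    (hvar : ∀ a v, dExp w (fun ω => (η a v ω) ^ 2) = ση ^ 2)
    (hindep : ∀ f : Fin K → Fin 2 → ℝ → ℝ,
      dExp w (fun ω => ∏ a, ∏ v, f a v (η a v ω))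
        = ∏ a, ∏ v, dExp w (fun ω => f a v (η a v ω)))
    (p q : Fin K × Fin 2) :
    dExp w (fun ω => η p.1 p.2 ω * η q.1 q.2 ω) = if q = p then ση ^ 2 else 0 := by
  by_cases hqp : q = p
  · subst hqp
    rw [if_pos rfl]
    have : (fun ω => η q.1 q.2 ω * η q.1 q.2 ω) = fun ω => (η q.1 q.2 ω) ^ 2 := by
      funext ω; ring
    rw [this, hvar]
  · rw [if_neg hqp]
    have hpq : p ≠ q := fun h => hqp h.symm
    have h := hindep (fun a v x => if (a, v) = p ∨ (a, v) = q then x else 1)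
    have hL : (fun ω => ∏ a, ∏ v, (if (a, v) = p ∨ (a, v) = q then η a v ω else 1))
        = fun ω => η p.1 p.2 ω * η q.1 q.2 ω := by
      funext ω
      rw [← Fintype.prod_prod_type
        (f := fun x : Fin K × Fin 2 => if x = p ∨ x = q then η x.1 x.2 ω else 1)]
      have hmem : ∀ x : Fin K × Fin 2,
          (if x = p ∨ x = q then η x.1 x.2 ω else 1)
            = (if x ∈ ({p, q} : Finset (Fin K × Fin 2)) then η x.1 x.2 ω else 1) := by
        intro x; simp [Finset.mem_insert, Finset.mem_singleton]
      rw [Finset.prod_congr rfl fun x _ => hmem x, Finset.prod_ite_mem,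
        Finset.univ_inter, Finset.prod_pair hpq]
    rw [hL] at h
    rw [h]
    refine Finset.prod_eq_zero (Finset.mem_univ p.1) ?_
    refine Finset.prod_eq_zero (Finset.mem_univ p.2) ?_
    have : (fun ω => if ((p.1 : Fin K), (p.2 : Fin 2)) = p ∨ (p.1, p.2) = q then η p.1 p.2 ω else 1)
        = η p.1 p.2 := by
      funext ω; rw [if_pos (Or.inl (Prod.mk.eta))]
    rw [this, hmean]

lemma mom4
    (hw1 : ∑ ω, w ω = 1)
    (hmean : ∀ a v, dExp w (η a v) = 0)
    (hvar : ∀ a v, dExp w (fun ω => (η a v ω) ^ 2) = ση ^ 2)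
    (hindep : ∀ f : Fin K → Fin 2 → ℝ → ℝ,
      dExp w (fun ω => ∏ a, ∏ v, f a v (η a v ω))
        = ∏ a, ∏ v, dExp w (fun ω => f a v (η a v ω)))
    (a b : Fin K) :
    dExp w (fun ω => (η a 0 ω * η a 1 ω) * (η b 0 ω * η b 1 ω))
      = if b = a then ση ^ 4 else 0 := by
  by_cases hba : b = a
  · subst hba
    rw [if_pos rfl]
    have h := hindep (fun a' v x => if a' = b then x ^ 2 else 1)
    have hL : (fun ω => ∏ a', ∏ v, (if a' = b then (η a' v ω) ^ 2 else 1))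
        = fun ω => (η b 0 ω * η b 1 ω) * (η b 0 ω * η b 1 ω) := by
      funext ω
      have h1 : ∀ a' : Fin K, (∏ v : Fin 2, if a' = b then (η a' v ω) ^ 2 else 1)
          = if a' = b then (η a' 0 ω) ^ 2 * (η a' 1 ω) ^ 2 else 1 := by
        intro a'; rw [Fin.prod_univ_two]; split_ifs <;> simp
      rw [Finset.prod_congr rfl fun a' _ => h1 a',
        Finset.prod_ite_eq' Finset.univ b fun a' => (η a' 0 ω) ^ 2 * (η a' 1 ω) ^ 2,
        if_pos (Finset.mem_univ b)]
      ring
    rw [hL] at h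
    rw [h]
    have h2 : ∀ (a' : Fin K) (v : Fin 2),
        dExp w (fun ω => if a' = b then (η a' v ω) ^ 2 else 1)
          = if a' = b then ση ^ 2 else 1 := by
      intro a' v
      by_cases hc : a' = b
      · subst hc
        simp only [if_pos rfl]
        exact hvar a' v
      · simp only [if_neg hc]
        exact dExp_one' w hw1
    have h3 : ∀ a' : Fin K,
        (∏ v : Fin 2, dExp w (fun ω => if a' = b then (η a' v ω) ^ 2 else 1))
          = if a' = b then ση ^ 4 else 1 := by
      intro a'
      rw [Fin.prod_univ_two, h2 a' 0, h2 a' 1]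
      split_ifs <;> ring
    rw [Finset.prod_congr rfl fun a' _ => h3 a',
      Finset.prod_ite_eq' Finset.univ b fun _ => ση ^ 4, if_pos (Finset.mem_univ b)]
  · rw [if_neg hba]
    have hab : a ≠ b := fun h => hba h.symm
    have h := hindep (fun a' v x => if a' = a ∨ a' = b then x else 1)
    have hL : (fun ω => ∏ a', ∏ v, (if a' = a ∨ a' = b then η a' v ω else 1))
        = fun ω => (η a 0 ω * η a 1 ω) * (η b 0 ω * η b 1 ω) := by
      funext ω
      have h1 : ∀ a' : Fin K, (∏ v : Fin 2, if a' = a ∨ a' = b then η a' v ω else 1)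
          = if a' ∈ ({a, b} : Finset (Fin K)) then η a' 0 ω * η a' 1 ω else 1 := by
        intro a'
        rw [Fin.prod_univ_two]
        by_cases hc : a' = a ∨ a' = b <;>
          simp [hc, Finset.mem_insert, Finset.mem_singleton]
      rw [Finset.prod_congr rfl fun a' _ => h1 a', Finset.prod_ite_mem,
        Finset.univ_inter, Finset.prod_pair hab]
    rw [hL] at h
    rw [h]
    refine Finset.prod_eq_zero (Finset.mem_univ a) ?_
    refine Finset.prod_eq_zero (Finset.mem_univ (0 : Fin 2)) ?_
    have : (fun ω => if a = a ∨ a = b then η a 0 ω else 1) = η a 0 := by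
      funext ω; rw [if_pos (Or.inl rfl)]
    rw [this, hmean]

lemma momH2sq
    (hmean : ∀ a v, dExp w (η a v) = 0)
    (hvar : ∀ a v, dExp w (fun ω => (η a v ω) ^ 2) = ση ^ 2)
    (hindep : ∀ f : Fin K → Fin 2 → ℝ → ℝ,
      dExp w (fun ω => ∏ a, ∏ v, f a v (η a v ω))
        = ∏ a, ∏ v, dExp w (fun ω => f a v (η a v ω)))
    (c : Fin K × Fin 2 → ℝ) :
    dExp w (fun ω => (∑ p : Fin K × Fin 2, c p * η p.1 p.2 ω) ^ 2)
      = ση ^ 2 * ∑ p : Fin K × Fin 2, c p ^ 2 := by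
  have hexp : (fun ω => (∑ p : Fin K × Fin 2, c p * η p.1 p.2 ω) ^ 2)
      = fun ω => ∑ p : Fin K × Fin 2, ∑ q : Fin K × Fin 2,
          (c p * c q) * (η p.1 p.2 ω * η q.1 q.2 ω) := by
    funext ω
    rw [sq, Finset.sum_mul_sum]
    exact Finset.sum_congr rfl fun p _ => Finset.sum_congr rfl fun q _ => by ring
  rw [hexp, dExp_sum',
    Finset.sum_congr rfl fun p _ =>
      dExp_sum' w Finset.univ fun q ω => (c p * c q) * (η p.1 p.2 ω * η q.1 q.2 ω),
    Finset.sum_congr rfl fun p _ => Finset.sum_congr rfl fun q _ =>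
      dExp_smul' w (c p * c q) _,
    Finset.sum_congr rfl fun p _ => Finset.sum_congr rfl fun q _ => by
      rw [momE w η ση hmean hvar hindep p q]]
  have hrow : ∀ p : Fin K × Fin 2,
      (∑ q : Fin K × Fin 2, c p * c q * (if q = p then ση ^ 2 else 0))
        = c p ^ 2 * ση ^ 2 := by
    intro p
    have : ∀ q : Fin K × Fin 2, c p * c q * (if q = p then ση ^ 2 else 0)
        = if q = p then c q ^ 2 * ση ^ 2 else 0 := by
      intro q; split_ifs with h
      · subst h; ring
      · ring
    rw [Finset.sum_congr rfl fun q _ => this q,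
      Finset.sum_ite_eq' Finset.univ p fun q => c q ^ 2 * ση ^ 2]
    simp
  rw [Finset.sum_congr rfl fun p _ => hrow p, ← Finset.sum_mul]
  ring

lemma momH3sq
    (hw1 : ∑ ω, w ω = 1)
    (hmean : ∀ a v, dExp w (η a v) = 0)
    (hvar : ∀ a v, dExp w (fun ω => (η a v ω) ^ 2) = ση ^ 2)
    (hindep : ∀ f : Fin K → Fin 2 → ℝ → ℝ,
      dExp w (fun ω => ∏ a, ∏ v, f a v (η a v ω))
        = ∏ a, ∏ v, dExp w (fun ω => f a v (η a v ω))) :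
    dExp w (fun ω => (∑ a, η a 0 ω * η a 1 ω) ^ 2) = K * ση ^ 4 := by
  have hexp : (fun ω => (∑ a, η a 0 ω * η a 1 ω) ^ 2)
      = fun ω => ∑ a : Fin K, ∑ b : Fin K,
          (η a 0 ω * η a 1 ω) * (η b 0 ω * η b 1 ω) := by
    funext ω
    rw [sq, Finset.sum_mul_sum]
  rw [hexp, dExp_sum',
    Finset.sum_congr rfl fun a _ =>
      dExp_sum' w Finset.univ fun b ω => (η a 0 ω * η a 1 ω) * (η b 0 ω * η b 1 ω),
    Finset.sum_congr rfl fun a _ => Finset.sum_congr rfl fun b _ => by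
      rw [mom4 w η ση hw1 hmean hvar hindep a b]]
  have hrow : ∀ a : Fin K,
      (∑ b : Fin K, (if b = a then ση ^ 4 else 0)) = ση ^ 4 := by
    intro a
    rw [Finset.sum_ite_eq' Finset.univ a fun _ => ση ^ 4]
    simp
  rw [Finset.sum_congr rfl fun a _ => hrow a, Finset.sum_const, Finset.card_univ,
    Fintype.card_fin, nsmul_eq_mul]

end moments

/-- two-fold JIVE denominator asymptotics:
H₂/H₁ →_P 0, H₃/H₁ →_P 0, hence Ĥ/H₁ →_P 1. -/
theorem stmt14
    (Ω : ℕ → Type) (inst : ∀ m, Fintype (Ω m))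
    (w : ∀ m, Ω m → ℝ) (hw : ∀ m ω, 0 ≤ w m ω) (hw1 : ∀ m, ∑ ω, w m ω = 1)
    (K : ℕ → ℕ) (hK : ∀ m, 0 < K m) (hKtop : Tendsto K atTop atTop)
    (π : ∀ m, Fin (K m) → ℝ)
    (η : ∀ m, Fin (K m) → Fin 2 → Ω m → ℝ)
    (ση : ℕ → ℝ) (hση : ∀ m, 0 < ση m)
    -- i.i.d. mean-zero errors with variance ση² across (cell, fold)
    (hmean : ∀ m a v, dExp (w m) (η m a v) = 0)
    (hvar : ∀ m a v, dExp (w m) (fun ω => (η m a v ω) ^ 2) = (ση m) ^ 2)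
    (hindep : ∀ m (f : Fin (K m) → Fin 2 → ℝ → ℝ),
      dExp (w m) (fun ω => ∏ a, ∏ v, f a v (η m a v ω))
        = ∏ a, ∏ v, dExp (w m) (fun ω => f a v (η m a v ω)))
    (hident : ∀ m (a b : Fin (K m)) (v u : Fin 2) (B : ℝ → Prop),
      dPr (w m) (fun ω => B (η m a v ω)) = dPr (w m) (fun ω => B (η m b u ω)))
    -- concentration: ∑ₐ πₐ²/(√K ση²) → ∞
    (hconc : Tendsto
      (fun m => (∑ a, (π m a) ^ 2) / (Real.sqrt (K m) * (ση m) ^ 2))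
      atTop atTop) :
    ∀ δ > (0 : ℝ),
      (Tendsto (fun m =>
        dPr (w m) (fun ω => δ ≤
          |(∑ a, π m a * (η m a 0 ω + η m a 1 ω)) / (∑ a, (π m a) ^ 2)|))
        atTop (𝓝 0))
      ∧ (Tendsto (fun m =>
          dPr (w m) (fun ω => δ ≤
            |(∑ a, η m a 0 ω * η m a 1 ω) / (∑ a, (π m a) ^ 2)|))
          atTop (𝓝 0))
      ∧ (Tendsto (fun m =>
          dPr (w m) (fun ω => δ ≤
            |(∑ a, (π m a + η m a 0 ω) * (π m a + η m a 1 ω))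
                / (∑ a, (π m a) ^ 2) - 1|))
          atTop (𝓝 0)) := by
  intro δ hδ
  set cm : ℕ → ℝ :=
    fun m => (∑ a, (π m a) ^ 2) / (Real.sqrt (K m) * (ση m) ^ 2) with hcdef
  have hconc' : Tendsto cm atTop atTop := hconc
  have hD : ∀ m, 0 < Real.sqrt (K m) * (ση m) ^ 2 := by
    intro m
    have h1 : (0 : ℝ) < Real.sqrt (K m) :=
      Real.sqrt_pos.2 (by exact_mod_cast hK m)
    exact mul_pos h1 (pow_pos (hση m) 2)
  have hsK : ∀ m, 1 ≤ Real.sqrt (K m) := by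
    intro m
    rw [show (1 : ℝ) = Real.sqrt 1 from Real.sqrt_one.symm]
    exact Real.sqrt_le_sqrt (by exact_mod_cast hK m)
  have hev : ∀ᶠ m in atTop, 1 ≤ cm m := hconc'.eventually_ge_atTop 1
  have hH1pos : ∀ m, 1 ≤ cm m → 0 < (∑ a, (π m a) ^ 2) := by
    intro m h1
    have h2 : Real.sqrt (K m) * (ση m) ^ 2 ≤ (∑ a, (π m a) ^ 2) :=
      (one_le_div (hD m)).1 h1
    linarith [hD m]
  have hH1eq : ∀ m, cm m * (Real.sqrt (K m) * (ση m) ^ 2) = (∑ a, (π m a) ^ 2) :=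
    fun m => div_mul_cancel₀ _ (ne_of_gt (hD m))
  -- second moment of H2
  have hEX2 : ∀ m, dExp (w m) (fun ω => (∑ a, π m a * (η m a 0 ω + η m a 1 ω)) ^ 2)
      = (ση m) ^ 2 * (2 * (∑ a, (π m a) ^ 2)) := by
    intro m
    have hre : (fun ω => (∑ a, π m a * (η m a 0 ω + η m a 1 ω)) ^ 2)
        = fun ω => (∑ p : Fin (K m) × Fin 2, π m p.1 * η m p.1 p.2 ω) ^ 2 := by
      funext ω
      congr 1
      rw [Fintype.sum_prod_type]
      exact Finset.sum_congr rfl fun a _ => by rw [Fin.sum_univ_two]; ring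
    have hsum : (∑ p : Fin (K m) × Fin 2, (π m p.1) ^ 2) = 2 * (∑ a, (π m a) ^ 2) := by
      rw [Fintype.sum_prod_type]
      rw [Finset.sum_congr rfl
        (fun a _ => Fin.sum_univ_two (f := fun _ : Fin 2 => (π m a) ^ 2))]
      rw [two_mul, Finset.sum_add_distrib]
    rw [hre, momH2sq (w m) (η m) (ση m) (hmean m) (hvar m) (hindep m)
      (fun p => π m p.1), hsum]
  have hEH3 : ∀ m, dExp (w m) (fun ω => (∑ a, η m a 0 ω * η m a 1 ω) ^ 2)
      = (K m) * (ση m) ^ 4 :=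
    fun m => momH3sq (w m) (η m) (ση m) (hw1 m) (hmean m) (hvar m) (hindep m)
  -- first limit, for arbitrary threshold γ > 0
  have key2 : ∀ γ : ℝ, 0 < γ → Tendsto (fun m =>
      dPr (w m) (fun ω => γ ≤
        |(∑ a, π m a * (η m a 0 ω + η m a 1 ω)) / (∑ a, (π m a) ^ 2)|))
      atTop (𝓝 0) := by
    intro γ hγ
    have hbnd : ∀ᶠ m in atTop,
        dPr (w m) (fun ω => γ ≤
          |(∑ a, π m a * (η m a 0 ω + η m a 1 ω)) / (∑ a, (π m a) ^ 2)|)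
          ≤ (2 / γ ^ 2) * (cm m)⁻¹ := by
      filter_upwards [hev] with m h1
      have hH1p := hH1pos m h1
      have hcp : 0 < cm m := lt_of_lt_of_le zero_lt_one h1
      have cheb := chebyshev (w m) (hw m)
        (fun ω => (∑ a, π m a * (η m a 0 ω + η m a 1 ω)) / (∑ a, (π m a) ^ 2)) hγ
      have hE : dExp (w m) (fun ω =>
          ((∑ a, π m a * (η m a 0 ω + η m a 1 ω)) / (∑ a, (π m a) ^ 2)) ^ 2)
          = (1 / (∑ a, (π m a) ^ 2) ^ 2) * ((ση m) ^ 2 * (2 * (∑ a, (π m a) ^ 2))) := by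
      -- rewrite the square of the quotient
        have hre : (fun ω =>
            ((∑ a, π m a * (η m a 0 ω + η m a 1 ω)) / (∑ a, (π m a) ^ 2)) ^ 2)
            = fun ω => (1 / (∑ a, (π m a) ^ 2) ^ 2)
                * (∑ a, π m a * (η m a 0 ω + η m a 1 ω)) ^ 2 := by
          funext ω; ring
        rw [hre, dExp_smul, hEX2 m]
      have hfrac : (ση m) ^ 2 / (∑ a, (π m a) ^ 2) ≤ (cm m)⁻¹ := by
        rw [div_le_iff₀ hH1p, ← hH1eq m]
        have h2 : (cm m)⁻¹ * (cm m * (Real.sqrt (K m) * (ση m) ^ 2))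
            = Real.sqrt (K m) * (ση m) ^ 2 := by
          field_simp
        rw [h2]
        nlinarith [hsK m, pow_pos (hση m) 2]
      refine le_trans cheb ?_
      rw [hE]
      calc (1 / (∑ a, (π m a) ^ 2) ^ 2 * ((ση m) ^ 2 * (2 * (∑ a, (π m a) ^ 2)))) / γ ^ 2
          = (2 / γ ^ 2) * ((ση m) ^ 2 / (∑ a, (π m a) ^ 2)) := by
            field_simp
        _ ≤ (2 / γ ^ 2) * (cm m)⁻¹ :=
            mul_le_mul_of_nonneg_left hfrac (by positivity)
    have hlim : Tendsto (fun m => (2 / γ ^ 2) * (cm m)⁻¹) atTop (𝓝 0) := by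
      have h0 : Tendsto (fun m => (cm m)⁻¹) atTop (𝓝 0) :=
        hconc'.inv_tendsto_atTop
      rw [show (0 : ℝ) = (2 / γ ^ 2) * 0 by ring]
      exact h0.const_mul (2 / γ ^ 2)
    refine tendsto_of_tendsto_of_tendsto_of_le_of_le' tendsto_const_nhds hlim
      (Eventually.of_forall fun m => dPr_nonneg (w m) (hw m) _) hbnd
  -- second limit, for arbitrary threshold γ > 0
  have key3 : ∀ γ : ℝ, 0 < γ → Tendsto (fun m =>
      dPr (w m) (fun ω => γ ≤
        |(∑ a, η m a 0 ω * η m a 1 ω) / (∑ a, (π m a) ^ 2)|))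
      atTop (𝓝 0) := by
    intro γ hγ
    have hbnd : ∀ᶠ m in atTop,
        dPr (w m) (fun ω => γ ≤
          |(∑ a, η m a 0 ω * η m a 1 ω) / (∑ a, (π m a) ^ 2)|)
          ≤ (1 / γ ^ 2) * (cm m)⁻¹ := by
      filter_upwards [hev] with m h1
      have hH1p := hH1pos m h1
      have hcp : 0 < cm m := lt_of_lt_of_le zero_lt_one h1
      have cheb := chebyshev (w m) (hw m)
        (fun ω => (∑ a, η m a 0 ω * η m a 1 ω) / (∑ a, (π m a) ^ 2)) hγ
      have hE : dExp (w m) (fun ω =>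
          ((∑ a, η m a 0 ω * η m a 1 ω) / (∑ a, (π m a) ^ 2)) ^ 2)
          = (1 / (∑ a, (π m a) ^ 2) ^ 2) * ((K m) * (ση m) ^ 4) := by
        have hre : (fun ω =>
            ((∑ a, η m a 0 ω * η m a 1 ω) / (∑ a, (π m a) ^ 2)) ^ 2)
            = fun ω => (1 / (∑ a, (π m a) ^ 2) ^ 2)
                * (∑ a, η m a 0 ω * η m a 1 ω) ^ 2 := by
          funext ω; ring
        rw [hre, dExp_smul, hEH3 m]
      have hsq : ((K m : ℝ)) * (ση m) ^ 4 = (Real.sqrt (K m) * (ση m) ^ 2) ^ 2 := by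
        rw [mul_pow, Real.sq_sqrt (by positivity : (0:ℝ) ≤ (K m : ℝ))]
        ring
      have hfrac : (1 / (∑ a, (π m a) ^ 2) ^ 2) * ((K m) * (ση m) ^ 4)
          = ((cm m)⁻¹) ^ 2 := by
        rw [hsq, ← hH1eq m]
        field_simp [ne_of_gt hcp, ne_of_gt (hD m), ne_of_gt (hση m),
          ne_of_gt (lt_of_lt_of_le zero_lt_one (hsK m))]
      have hinv1 : (cm m)⁻¹ ≤ 1 := by
        rw [inv_le_one_iff₀]
        right; exact h1
      refine le_trans cheb ?_
      rw [hE, hfrac]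
      calc ((cm m)⁻¹) ^ 2 / γ ^ 2 = (1 / γ ^ 2) * ((cm m)⁻¹ * (cm m)⁻¹) := by ring
        _ ≤ (1 / γ ^ 2) * (1 * (cm m)⁻¹) := by
            apply mul_le_mul_of_nonneg_left _ (by positivity)
            exact mul_le_mul_of_nonneg_right hinv1 (by positivity)
        _ = (1 / γ ^ 2) * (cm m)⁻¹ := by ring
    have hlim : Tendsto (fun m => (1 / γ ^ 2) * (cm m)⁻¹) atTop (𝓝 0) := by
      have h0 : Tendsto (fun m => (cm m)⁻¹) atTop (𝓝 0) :=
        hconc'.inv_tendsto_atTop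
      rw [show (0 : ℝ) = (1 / γ ^ 2) * 0 by ring]
      exact h0.const_mul (1 / γ ^ 2)
    refine tendsto_of_tendsto_of_tendsto_of_le_of_le' tendsto_const_nhds hlim
      (Eventually.of_forall fun m => dPr_nonneg (w m) (hw m) _) hbnd
  -- third limit
  have key1 : Tendsto (fun m =>
      dPr (w m) (fun ω => δ ≤
        |(∑ a, (π m a + η m a 0 ω) * (π m a + η m a 1 ω))
            / (∑ a, (π m a) ^ 2) - 1|)) atTop (𝓝 0) := by
    have hsplit : ∀ m, 0 < (∑ a, (π m a) ^ 2) → ∀ ω : Ω m,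
        (δ ≤ |(∑ a, (π m a + η m a 0 ω) * (π m a + η m a 1 ω))
            / (∑ a, (π m a) ^ 2) - 1|) →
        (δ / 2 ≤ |(∑ a, π m a * (η m a 0 ω + η m a 1 ω)) / (∑ a, (π m a) ^ 2)|)
          ∨ (δ / 2 ≤ |(∑ a, η m a 0 ω * η m a 1 ω) / (∑ a, (π m a) ^ 2)|) := by
      intro m hpos ω hδω
      by_contra hcon
      push_neg at hcon
      obtain ⟨hA, hB⟩ := hcon
      have hdecomp : (∑ a, (π m a + η m a 0 ω) * (π m a + η m a 1 ω))
          = (∑ a, (π m a) ^ 2) + (∑ a, π m a * (η m a 0 ω + η m a 1 ω))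
            + (∑ a, η m a 0 ω * η m a 1 ω) := by
        rw [← Finset.sum_add_distrib, ← Finset.sum_add_distrib]
        exact Finset.sum_congr rfl fun a _ => by ring
      have heq : (∑ a, (π m a + η m a 0 ω) * (π m a + η m a 1 ω))
            / (∑ a, (π m a) ^ 2) - 1
          = (∑ a, π m a * (η m a 0 ω + η m a 1 ω)) / (∑ a, (π m a) ^ 2)
            + (∑ a, η m a 0 ω * η m a 1 ω) / (∑ a, (π m a) ^ 2) := by
        rw [hdecomp]
        field_simp
        ring
      rw [heq] at hδω
      have htri := abs_add_le
        ((∑ a, π m a * (η m a 0 ω + η m a 1 ω)) / (∑ a, (π m a) ^ 2))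
        ((∑ a, η m a 0 ω * η m a 1 ω) / (∑ a, (π m a) ^ 2))
      linarith
    have hb3 : ∀ᶠ m in atTop,
        dPr (w m) (fun ω => δ ≤
          |(∑ a, (π m a + η m a 0 ω) * (π m a + η m a 1 ω))
              / (∑ a, (π m a) ^ 2) - 1|)
        ≤ dPr (w m) (fun ω => δ / 2 ≤
            |(∑ a, π m a * (η m a 0 ω + η m a 1 ω)) / (∑ a, (π m a) ^ 2)|)
          + dPr (w m) (fun ω => δ / 2 ≤
            |(∑ a, η m a 0 ω * η m a 1 ω) / (∑ a, (π m a) ^ 2)|) := by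
      filter_upwards [hev] with m h1
      exact le_trans
        (dPr_mono (w m) (hw m) fun ω hω => hsplit m (hH1pos m h1) ω hω)
        (dPr_or_le (w m) (hw m) _ _)
    have hδ2 : (0 : ℝ) < δ / 2 := by linarith
    have hlim : Tendsto (fun m =>
        dPr (w m) (fun ω => δ / 2 ≤
          |(∑ a, π m a * (η m a 0 ω + η m a 1 ω)) / (∑ a, (π m a) ^ 2)|)
        + dPr (w m) (fun ω => δ / 2 ≤
          |(∑ a, η m a 0 ω * η m a 1 ω) / (∑ a, (π m a) ^ 2)|))
        atTop (𝓝 0) := by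
      simpa using (key2 (δ / 2) hδ2).add (key3 (δ / 2) hδ2)
    refine tendsto_of_tendsto_of_tendsto_of_le_of_le' tendsto_const_nhds hlim
      (Eventually.of_forall fun m => dPr_nonneg (w m) (hw m) _) hb3
  exact ⟨key2 δ hδ, key3 δ hδ, key1⟩
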